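/- Let g be a solution of the associated Laguerre equation u g''(u) + (α + 1/2 − u) g'(u) = (E²/(4λ)) g(u), define u = −λ z² and ψ(z) = z^α e^{−u/2} g(u) (for λ ≠ 0, z ≠ 0, fixed branch of z^α). Then ψ satisfies ψ''(z) = (V(z)² + V'(z) − E²) ψ(z) where V(z) = α/z + λ z. -/

import Mathlib

open Complex

/-- Laguerre reduction of the Dirac equation for V(z) = α/z + λz: if g solves the
associated Laguerre equation u g'' + (α + 1/2 − u) g' = (E²/(4λ)) g and
ψ(z) = z^α e^{−u/2} g(u) with u = −λz² (fixed branch of z^α via a branch L of log on an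
open set U ⊆ ℂ \ {0}), then ψ'' = (V² + V' − E²)ψ on U. -/
theorem laguerre_reduction (α lam E : ℂ) (hlam : lam ≠ 0)
    (g : ℂ → ℂ) (hg1 : Differentiable ℂ g) (hg2 : Differentiable ℂ (deriv g))
    (hg : ∀ u : ℂ, u * deriv (deriv g) u + (α + 1 / 2 - u) * deriv g u
      = (E ^ 2 / (4 * lam)) * g u)
    (U : Set ℂ) (hU : IsOpen U) (hU0 : (0 : ℂ) ∉ U)
    (L : ℂ → ℂ) (hL : ∀ z ∈ U, Complex.exp (L z) = z)
    (hL' : ∀ z ∈ U, HasDerivAt L (1 / z) z)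
    (V ψ : ℂ → ℂ)
    (hV : ∀ z : ℂ, z ≠ 0 → V z = α / z + lam * z)
    (hψ : ∀ z ∈ U, ψ z = Complex.exp (α * L z) * Complex.exp (lam * z ^ 2 / 2)
      * g (-lam * z ^ 2)) :
    ∀ z ∈ U, deriv (deriv ψ) z = (V z ^ 2 + deriv V z - E ^ 2) * ψ z := by
  set P : ℂ → ℂ := fun w => Complex.exp (α * L w) * Complex.exp (lam * w ^ 2 / 2) with hPdef
  set F : ℂ → ℂ := fun w => P w * g (-lam * w ^ 2) with hFdef
  set G : ℂ → ℂ := fun w => P w * ((α / w + lam * w) * g (-lam * w ^ 2)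
      - 2 * lam * w * deriv g (-lam * w ^ 2)) with hGdef
  -- derivative of the inner map x ↦ -lam * x^2
  have hinner : ∀ w : ℂ, HasDerivAt (fun x : ℂ => -lam * x ^ 2) (-2 * lam * w) w := by
    intro w
    have := (hasDerivAt_pow 2 w).const_mul (-lam)
    exact this.congr_deriv (by push_cast; ring)
  have hgd : ∀ w : ℂ, HasDerivAt (fun x => g (-lam * x ^ 2))
      (deriv g (-lam * w ^ 2) * (-2 * lam * w)) w := by
    intro w
    exact ((hg1 _).hasDerivAt).comp w (hinner w)
  have hgd2 : ∀ w : ℂ, HasDerivAt (fun x => deriv g (-lam * x ^ 2))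
      (deriv (deriv g) (-lam * w ^ 2) * (-2 * lam * w)) w := by
    intro w
    exact ((hg2 _).hasDerivAt).comp w (hinner w)
  have hPd : ∀ w ∈ U, HasDerivAt P (P w * (α / w + lam * w)) w := by
    intro w hw
    have hw0 : w ≠ 0 := fun h => hU0 (h ▸ hw)
    have h1 : HasDerivAt (fun x => Complex.exp (α * L x))
        (Complex.exp (α * L w) * (α * (1 / w))) w := ((hL' w hw).const_mul α).cexp
    have h2 : HasDerivAt (fun x => Complex.exp (lam * x ^ 2 / 2))
        (Complex.exp (lam * w ^ 2 / 2) * (lam * w)) w := by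
      have h3 : HasDerivAt (fun x : ℂ => lam * x ^ 2 / 2) (lam * w) w := by
        have := ((hasDerivAt_pow 2 w).const_mul lam).div_const 2
        exact this.congr_deriv (by push_cast; ring)
      exact h3.cexp
    have := h1.mul h2
    exact this.congr_deriv (by simp only [hPdef]; field_simp)
  have hFd : ∀ w ∈ U, HasDerivAt F (G w) w := by
    intro w hw
    have := (hPd w hw).mul (hgd w)
    exact this.congr_deriv (by simp only [hGdef]; ring)
  have hψ1 : ∀ w ∈ U, deriv ψ w = G w := by
    intro w hw
    have heq : ψ =ᶠ[nhds w] F :=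
      Filter.eventuallyEq_of_mem (hU.mem_nhds hw) (fun x hx => hψ x hx)
    rw [heq.deriv_eq]
    exact (hFd w hw).deriv
  intro z hz
  have hz0 : z ≠ 0 := fun h => hU0 (h ▸ hz)
  -- derivative of G at z
  have hhd : HasDerivAt (fun w => (α / w + lam * w) * g (-lam * w ^ 2)
      - 2 * lam * w * deriv g (-lam * w ^ 2))
      ((α * -(z ^ 2)⁻¹ + lam) * g (-lam * z ^ 2)
        + (α / z + lam * z) * (deriv g (-lam * z ^ 2) * (-2 * lam * z))
        - (2 * lam * deriv g (-lam * z ^ 2)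
          + 2 * lam * z * (deriv (deriv g) (-lam * z ^ 2) * (-2 * lam * z)))) z := by
    have ha : HasDerivAt (fun x : ℂ => α / x + lam * x) (α * -(z ^ 2)⁻¹ + lam) z := by
      have h1 := (hasDerivAt_inv hz0).const_mul α
      have h2 := (hasDerivAt_id z).const_mul lam
      have := h1.add h2
      simp only [div_eq_mul_inv, mul_one] at this ⊢
      exact this
    have hb : HasDerivAt (fun x : ℂ => 2 * lam * x) (2 * lam) z := by
      have := (hasDerivAt_id z).const_mul (2 * lam)
      simpa using this
    exact (ha.mul (hgd z)).sub (hb.mul (hgd2 z))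
  have hGd : HasDerivAt G
      (P z * (α / z + lam * z) * ((α / z + lam * z) * g (-lam * z ^ 2)
        - 2 * lam * z * deriv g (-lam * z ^ 2))
      + P z * ((α * -(z ^ 2)⁻¹ + lam) * g (-lam * z ^ 2)
        + (α / z + lam * z) * (deriv g (-lam * z ^ 2) * (-2 * lam * z))
        - (2 * lam * deriv g (-lam * z ^ 2)
          + 2 * lam * z * (deriv (deriv g) (-lam * z ^ 2) * (-2 * lam * z))))) z :=
    (hPd z hz).mul hhd
  have hdd : deriv (deriv ψ) z = deriv G z := by
    have heq : deriv ψ =ᶠ[nhds z] G :=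
      Filter.eventuallyEq_of_mem (hU.mem_nhds hz) (fun x hx => hψ1 x hx)
    exact heq.deriv_eq
  rw [hdd, hGd.deriv]
  -- deriv V
  have hVd : deriv V z = α * -(z ^ 2)⁻¹ + lam := by
    have hev : V =ᶠ[nhds z] fun x => α / x + lam * x :=
      Filter.eventuallyEq_of_mem (isOpen_compl_singleton.mem_nhds hz0)
        (fun x hx => hV x hx)
    rw [hev.deriv_eq]
    have ha : HasDerivAt (fun x : ℂ => α / x + lam * x) (α * -(z ^ 2)⁻¹ + lam) z := by
      have h1 := (hasDerivAt_inv hz0).const_mul α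
      have h2 := (hasDerivAt_id z).const_mul lam
      have := h1.add h2
      simp only [div_eq_mul_inv, mul_one] at this ⊢
      exact this
    exact ha.deriv
  rw [hVd, hV z hz0, hψ z hz]
  -- final algebra using the Laguerre equation at u = -lam z^2
  have key := hg (-lam * z ^ 2)
  have key' : E ^ 2 * g (-lam * z ^ 2) =
      4 * lam * ((-lam * z ^ 2) * deriv (deriv g) (-lam * z ^ 2)
        + (α + 1 / 2 - (-lam * z ^ 2)) * deriv g (-lam * z ^ 2)) := by
    rw [key]
    field_simp
  set A := g (-lam * z ^ 2)
  set B := deriv g (-lam * z ^ 2)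
  set C := deriv (deriv g) (-lam * z ^ 2)
  have hz2 : z ^ 2 ≠ 0 := pow_ne_zero 2 hz0
  field_simp
  simp only [hPdef]
  rw [show z ^ 2 * lam / 2 = lam * z ^ 2 / 2 by ring]
  linear_combination (Complex.exp (α * L z) * Complex.exp (lam * z ^ 2 / 2) * z ^ 2) * key'
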